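/- Suppose A, B, C are inputs and X, Y, Z outputs of a tripartite conditional distribution P_{XYZ|ABC}, and suppose the free choice condition holds for A: the distribution of A is independent of (B, C, Y, Z), i.e., P_{A|BCYZ} = P_A with P_A(a) > 0 for all a. Then the non-signalling condition P_{YZ|ABC} = P_{YZ|BC} holds. -/
import Mathlib


open Finset

/-- Free choice implies non-signalling.  `Pin` is the input distribution `P_{ABC}` and
`Pc` is the conditional distribution `P_{XYZ|ABC}`; together they define the joint
distribution `J`.  If `A` is a free choice, i.e. `P_{A|BCYZ} = P_A` with `P_A(a) > 0`
for all `a`, then the non-signalling condition `P_{YZ|ABC} = P_{YZ|BC}` holds. -/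
theorem free_choice_implies_non_signalling
    {α β γ ξ υ ζ : Type*} [Fintype α] [Fintype β] [Fintype γ]
    [Fintype ξ] [Fintype υ] [Fintype ζ]
    (Pin : α → β → γ → ℝ) (Pc : α → β → γ → ξ → υ → ζ → ℝ)
    (hPin0 : ∀ a b c, 0 ≤ Pin a b c) (hPin1 : ∑ a, ∑ b, ∑ c, Pin a b c = 1)
    (hPc0 : ∀ a b c x y z, 0 ≤ Pc a b c x y z)
    (hPc1 : ∀ a b c, ∑ x, ∑ y, ∑ z, Pc a b c x y z = 1)
    -- the joint distribution
    (J : α → β → γ → ξ → υ → ζ → ℝ)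
    (hJ : ∀ a b c x y z, J a b c x y z = Pin a b c * Pc a b c x y z)
    -- free choice: P_{A|BCYZ} = P_A, with P_A(a) > 0 for all a
    (hApos : ∀ a, 0 < ∑ b, ∑ c, ∑ x, ∑ y, ∑ z, J a b c x y z)
    (hfree : ∀ a b c y z, (0 < ∑ a', ∑ x, J a' b c x y z) →
      (∑ x, J a b c x y z) / (∑ a', ∑ x, J a' b c x y z) =
        ∑ b', ∑ c', ∑ x, ∑ y', ∑ z', J a b' c' x y' z') :
    -- non-signalling: P_{YZ|ABC} = P_{YZ|BC}
    ∀ a b c y z, (0 < ∑ x, ∑ y', ∑ z', J a b c x y' z') →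
      (0 < ∑ a', ∑ x, ∑ y', ∑ z', J a' b c x y' z') →
      (∑ x, J a b c x y z) / (∑ x, ∑ y', ∑ z', J a b c x y' z') =
        (∑ a', ∑ x, J a' b c x y z) / (∑ a', ∑ x, ∑ y', ∑ z', J a' b c x y' z') := by
  intro a b c y z h1 h2
  have hJ0 : ∀ a b c x y z, 0 ≤ J a b c x y z := fun a b c x y z => by
    rw [hJ]; exact mul_nonneg (hPin0 _ _ _) (hPc0 _ _ _ _ _ _)
  set P : ℝ := ∑ b', ∑ c', ∑ x, ∑ y', ∑ z', J a b' c' x y' z' with hP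
  have hPpos : 0 < P := hApos a
  -- key: for every y z, ∑ x, J a b c x y z = P * (∑ a', ∑ x, J a' b c x y z)
  have key : ∀ y z, (∑ x, J a b c x y z) = P * (∑ a', ∑ x, J a' b c x y z) := by
    intro y z
    have hT0 : 0 ≤ ∑ a', ∑ x, J a' b c x y z :=
      Finset.sum_nonneg fun a' _ => Finset.sum_nonneg fun x _ => hJ0 _ _ _ _ _ _
    rcases hT0.eq_or_lt with h | h
    · have hall := (Finset.sum_eq_zero_iff_of_nonneg
        (fun a' _ => Finset.sum_nonneg fun x _ => hJ0 a' _ _ _ _ _)).mp h.symm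
      rw [hall a (Finset.mem_univ a), ← h, mul_zero]
    · have := hfree a b c y z h
      field_simp at this
      rw [this, mul_comm]
  have swap3 : ∀ (f : ξ → υ → ζ → ℝ), (∑ x, ∑ y, ∑ z, f x y z) = ∑ y, ∑ z, ∑ x, f x y z := by
    intro f
    rw [Finset.sum_comm]
    exact Finset.sum_congr rfl fun y _ => Finset.sum_comm
  -- denominators
  have hden1 : (∑ x, ∑ y', ∑ z', J a b c x y' z')
      = P * ∑ y', ∑ z', ∑ a', ∑ x, J a' b c x y' z' := by
    rw [swap3]
    rw [show (∑ y', ∑ z', ∑ x, J a b c x y' z')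
        = ∑ y', ∑ z', P * (∑ a', ∑ x, J a' b c x y' z') from
      Finset.sum_congr rfl fun y' _ => Finset.sum_congr rfl fun z' _ => key y' z']
    simp [Finset.mul_sum]
  have hden2 : (∑ a', ∑ x, ∑ y', ∑ z', J a' b c x y' z')
      = ∑ y', ∑ z', ∑ a', ∑ x, J a' b c x y' z' := by
    rw [show (∑ a', ∑ x, ∑ y', ∑ z', J a' b c x y' z')
        = ∑ a', ∑ y', ∑ z', ∑ x, J a' b c x y' z' from
      Finset.sum_congr rfl fun a' _ => swap3 _]
    rw [Finset.sum_comm]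
    exact Finset.sum_congr rfl fun y _ => Finset.sum_comm
  rw [key y z, hden1, hden2, mul_div_mul_left _ _ hPpos.ne']
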